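/- arXiv:1111.1459 — 2 statements merged into one kernel-verified Lean document; each statement's English description precedes it below -/
import Mathlib

section
/- If r is a balanced two-state rotor type, then b(UU(r)) + b(DD(r)) ≥ 2·b(r), where the balance coefficients of UU(r) and DD(r) are computed regarding them as periodic two-state sequences with period length |r|. -/
open scoped Classical

/-! ### Periodic sequences and rotor types

A rotor type is modelled as a function `f : ℕ → ℕ` (0-based reindexing of the paper's
sequence `r(1), r(2), …`, so the paper's `r(k)` is `f (k-1)`), together with its minimal
period `n`.  The states of the rotor are the values occurring in one period. -/

def IsPeriodicWith {α : Type*} (f : ℕ → α) (n : ℕ) : Prop := ∀ k, f (k + n) = f k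

def IsMinimalPeriod {α : Type*} (f : ℕ → α) (n : ℕ) : Prop :=
  0 < n ∧ IsPeriodicWith f n ∧ ∀ m, 0 < m → IsPeriodicWith f m → n ≤ m

noncomputable def minPeriod {α : Type*} (f : ℕ → α) : ℕ :=
  sInf {n | 0 < n ∧ IsPeriodicWith f n}

/-- `f` (with period `n`) reads the same forwards and backwards:
`r(k) = r(n+1-k)` for `1 ≤ k ≤ n`, written 0-based. -/
def Palindromic (f : ℕ → ℕ) (n : ℕ) : Prop := ∀ k < n, f k = f (n - 1 - k)

/-- `f` (with period `n`) is block-repetitive with block length `m`. -/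
def BlockRepetitive (f : ℕ → ℕ) (n m : ℕ) : Prop :=
  2 ≤ m ∧ m ∣ n ∧ ∀ k : ℕ, ∀ j < m, f (k * m + j) = f (k * m)

def Boppy (f : ℕ → ℕ) (n : ℕ) : Prop := Palindromic f n ∨ ∃ m, BlockRepetitive f n m

/-- The set of states of a rotor type of period `n`. -/
def states (f : ℕ → ℕ) (n : ℕ) : Finset ℕ := (Finset.range n).image f

/-- Number of occurrences of the state `v` among the first `n` terms of `f`. -/
noncomputable def countIn (f : ℕ → ℕ) (n v : ℕ) : ℕ :=
  ((Finset.range n).filter (fun k => f k = v)).card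

/-- Merging reduction `s → s'`: replace every occurrence of `s` by `s'`. -/
def merge (f : ℕ → ℕ) (s s' : ℕ) : ℕ → ℕ := fun k => if f k = s then s' else f k

/-- Destructive reduction `x(s)`: delete every occurrence of `s` and re-index. -/
noncomputable def destroy (f : ℕ → ℕ) (s : ℕ) : ℕ → ℕ :=
  fun k => f (Nat.nth (fun i => f i ≠ s) k)

/-- A two-state rotor type with states `1` and `2`, both occurring. -/
def TwoState (f : ℕ → ℕ) : Prop :=
  (∀ k, f k = 1 ∨ f k = 2) ∧ (∃ k, f k = 1) ∧ (∃ k, f k = 2)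

/-! ### The compressor

The particle's trajectory alternates: at step `t` (0-based) the source `v1` fires its
`(t+1)`-st term `f t`; if it is `1`, the particle moves to `v2`, whose firing count so far
is the number of `1`'s among `f 0, …, f (t-1)`; if it is `2`, it moves to `v3` similarly.
From `v2`/`v3` the particle either returns to the source (no target hit) or hits target
`4`/`5` and restarts at the source.  `X Y : Bool` encode the variation, `true` = `U`:
at `v2` state `1` routes up to `v1` iff `X = true`; at `v3` state `1` routes up iff
`Y = true`. -/

noncomputable def hitAt (X Y : Bool) (r : ℕ → ℕ) (t : ℕ) : Option ℕ :=
  if r t = 1 then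
    (if decide (r (countIn r t 1) = 1) ≠ X then some 4 else none)
  else
    (if decide (r (countIn r t 2) = 1) ≠ Y then some 5 else none)

/-- The hitting sequence of the compressor variation `XY` on rotor type `r`:
the subsequence of recorded targets (`4` or `5`), in order. -/
noncomputable def compSeq (X Y : Bool) (r : ℕ → ℕ) : ℕ → ℕ :=
  fun k => (hitAt X Y r (Nat.nth (fun t => (hitAt X Y r t).isSome = true) k)).getD 4

noncomputable def UUseq (r : ℕ → ℕ) : ℕ → ℕ := compSeq true true r
noncomputable def UDseq (r : ℕ → ℕ) : ℕ → ℕ := compSeq true false r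
noncomputable def DUseq (r : ℕ → ℕ) : ℕ → ℕ := compSeq false true r
noncomputable def DDseq (r : ℕ → ℕ) : ℕ → ℕ := compSeq false false r

/-- The compressor output with targets `4, 5` relabelled as states `1, 2`. -/
noncomputable def compOp (X Y : Bool) (r : ℕ → ℕ) : ℕ → ℕ := fun k => compSeq X Y r k - 3

noncomputable def UUop (r : ℕ → ℕ) : ℕ → ℕ := compOp true true r
noncomputable def UDop (r : ℕ → ℕ) : ℕ → ℕ := compOp true false r
noncomputable def DUop (r : ℕ → ℕ) : ℕ → ℕ := compOp false true r
noncomputable def DDop (r : ℕ → ℕ) : ℕ → ℕ := compOp false false r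

/-- A finite composition of compressor operations (each given by its pair of letters),
with the targets relabelled back to `1, 2` after each application. -/
noncomputable def applyOps (ops : List (Bool × Bool)) (r : ℕ → ℕ) : ℕ → ℕ :=
  ops.foldl (fun s o => compOp o.1 o.2 s) r

/-- The hitting sequence of the depth-2 binary tree network `BT` on `r`
(targets `1,2,3,4`): every firing of the source produces a hit. -/
noncomputable def BTseq (r : ℕ → ℕ) : ℕ → ℕ :=
  fun t => if r t = 1 then (if r (countIn r t 1) = 1 then 1 else 2)
           else (if r (countIn r t 2) = 1 then 3 else 4)

/-- Two sequences are equivalent if one is obtained from the other by a relabelling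
that is injective on the values of the first (a bijective relabelling of states). -/
def SeqEquiv {α β : Type*} (f : ℕ → α) (g : ℕ → β) : Prop :=
  ∃ ρ : α → β, (∀ k, ρ (f k) = g k) ∧ ∀ k l, ρ (f k) = ρ (f l) → f k = f l

/-- Every aligned block of length `m` of `f` contains states `1` and `2` equally often
(`m = 2n` gives `2n`-balance). -/
def BalancedBlocks (f : ℕ → ℕ) (m : ℕ) : Prop :=
  ∀ k : ℕ, countIn (fun j => f (k * m + j)) m 1 = countIn (fun j => f (k * m + j)) m 2

/-- `f ≡_m g` : some relabelling of `f` (injective on states) has the same multiset of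
entries as `g` on every aligned block of length `m`. -/
def BlockEquiv (f g : ℕ → ℕ) (m : ℕ) : Prop :=
  ∃ ρ : ℕ → ℕ, (∀ k l, ρ (f k) = ρ (f l) ↔ f k = f l) ∧
    ∀ k : ℕ, (Multiset.range m).map (fun j => ρ (f (k * m + j))) =
             (Multiset.range m).map (fun j => g (k * m + j))

/-- `L` is a balanced run decomposition of one period (of length `p`) of `f`:
a list of positive run lengths summing to `p` such that each corresponding
consecutive run contains `1` and `2` equally often. -/
noncomputable def IsBRD (f : ℕ → ℕ) (p : ℕ) (L : List ℕ) : Prop :=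
  L.sum = p ∧ (∀ a ∈ L, 0 < a) ∧
  ∀ i : Fin L.length,
    countIn (fun j => f ((L.take i.1).sum + j)) (L.get i) 1 =
    countIn (fun j => f ((L.take i.1).sum + j)) (L.get i) 2

/-- `L` is a uniform run decomposition of one period (of length `p`) of `f`:
a list of positive run lengths summing to `p` such that each corresponding
consecutive run is constant. -/
def IsURD (f : ℕ → ℕ) (p : ℕ) (L : List ℕ) : Prop :=
  L.sum = p ∧ (∀ a ∈ L, 0 < a) ∧
  ∀ i : Fin L.length, ∀ j < L.get i, f ((L.take i.1).sum + j) = f ((L.take i.1).sum)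

/-- The maximal number of runs in a BRD of `f` (period `p`). -/
noncomputable def maxBRD (f : ℕ → ℕ) (p : ℕ) : ℕ :=
  sSup {m | ∃ L : List ℕ, IsBRD f p L ∧ L.length = m}

/-- The balance coefficient `b(f)` (with respect to period length `p`). -/
noncomputable def balCoeff (f : ℕ → ℕ) (p : ℕ) : ℚ := (maxBRD f p : ℚ) / (p : ℚ)

/-- The type of a run decomposition, as an infinite periodic sequence of run data. -/
def typeSeq (L : List ℕ) : ℕ → ℕ := fun i => L.getD (i % L.length) 0

/-- A BURD rotor: it has a BRD and a URD of the same type, i.e. the `i`-th balanced run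
has length `2·b_i` where `b_i` is the length of the `i`-th uniform run. -/
noncomputable def IsBURD (f : ℕ → ℕ) (p : ℕ) : Prop :=
  ∃ L M : List ℕ, IsBRD f p L ∧ IsURD f p M ∧ ∀ i, typeSeq L i = 2 * typeSeq M i

/-- The ba-frequency `m(f) = 2k/p` of an ab-ba sequence with period length `p`,
where `k` is the number of `21` blocks per period. -/
noncomputable def baFreq (f : ℕ → ℕ) (p : ℕ) : ℚ :=
  (2 * (((Finset.range (p / 2)).filter (fun j => f (2 * j) = 2)).card : ℚ)) / (p : ℚ)

/-! ### Rotor-router networks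

A rotor-router network on a vertex type `V`: a source, a finite set of targets
(outdegree 0), and at every non-target vertex `v` the rotor pattern, recorded by the
sequence `rotor v : ℕ → V` of heads of its successive out-edges.  The underlying digraph
has an edge `v → w` (for non-target `v`) iff `w` occurs in `v`'s rotor pattern. -/

structure RotorNetwork (V : Type) where
  source : V
  target : Finset V
  rotor : V → ℕ → V

namespace RotorNetwork

variable {V : Type} [DecidableEq V]

/-- One step of the particle dynamics on states `(current position, firing counts)`:
at a target, record it and restart at the source; at a non-target vertex `v`, fire the
next term of `v`'s rotor pattern. -/
noncomputable def step (N : RotorNetwork V) (s : V × (V → ℕ)) : V × (V → ℕ) :=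
  if s.1 ∈ N.target then (N.source, s.2)
  else (N.rotor s.1 (s.2 s.1), Function.update s.2 s.1 (s.2 s.1 + 1))

/-- The full trajectory of the particle, started at the source with all rotors fresh. -/
noncomputable def traj (N : RotorNetwork V) : ℕ → V × (V → ℕ)
  | 0 => (N.source, fun _ => 0)
  | t + 1 => N.step (N.traj t)

/-- The hitting sequence: the subsequence of targets visited, in order. -/
noncomputable def hitSeq (N : RotorNetwork V) : ℕ → V :=
  fun k => (N.traj (Nat.nth (fun t => (N.traj t).1 ∈ N.target) k)).1

/-- Adjacency of the underlying digraph. -/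
def adj (N : RotorNetwork V) (v w : V) : Prop :=
  v ∉ N.target ∧ ∃ k, N.rotor v k = w

/-- A valid rotor-router network: the source is not a target, there is at least one
target, and every non-target vertex can reach some target. -/
def Valid (N : RotorNetwork V) : Prop :=
  N.source ∉ N.target ∧ N.target.Nonempty ∧
  ∀ v : V, v ∉ N.target → ∃ t ∈ N.target, Relation.ReflTransGen N.adj v t

/-- The rotor pattern at `v` has type `r`: it is `e ∘ r` for some assignment `e` of
states to out-neighbours. -/
def HasType (N : RotorNetwork V) (v : V) (r : ℕ → ℕ) : Prop :=
  ∃ e : ℕ → V, ∀ k, N.rotor v k = e (r k)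

end RotorNetwork

/-- The alternating rotor type `1, 2, 1, 2, …` of period `2`. -/
def rot12 : ℕ → ℕ := fun k => if k % 2 = 0 then 1 else 2

/-- `r` is universal: every rotor type `r'` is, up to a bijective relabelling of states,
the hitting sequence of some finite rotor-router network all of whose rotors have type `r`. -/
noncomputable def Universal (r : ℕ → ℕ) : Prop :=
  ∀ (r' : ℕ → ℕ) (n' : ℕ), IsMinimalPeriod r' n' →
    ∃ (m : ℕ) (N : RotorNetwork (Fin m)), N.Valid ∧
      (∀ v, v ∉ N.target → N.HasType v r) ∧ SeqEquiv N.hitSeq r'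

/-- The (1-based) position of the `m`-th occurrence of the state `v` in `f`
(`posOf f 1 = f`, `posOf f 2 = g` in the paper's notation; `countIn f · 1 = F`,
`countIn f · 2 = G`). -/
noncomputable def posOf (f : ℕ → ℕ) (v m : ℕ) : ℕ := Nat.nth (fun k => f k = v) (m - 1) + 1


/-! ### Auxiliary lemmas for Statement 10 -/

lemma aux_countIn_succ (f : ℕ → ℕ) (n v : ℕ) :
    countIn f (n+1) v = countIn f n v + if f n = v then 1 else 0 := by
  unfold countIn
  rw [Finset.range_add_one, Finset.filter_insert]
  split <;> simp [Finset.card_insert_of_notMem]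

lemma aux_countIn_eq_count (f : ℕ → ℕ) (n v : ℕ) :
    countIn f n v = Nat.count (fun k => f k = v) n := by
  rw [Nat.count_eq_card_filter_range]; rfl

lemma aux_countIn_congr (f g : ℕ → ℕ) (n v : ℕ) (h : ∀ j < n, f j = g j) :
    countIn f n v = countIn g n v := by
  unfold countIn
  apply Finset.card_bij (fun a _ => a) <;> simp_all [Finset.mem_filter]

lemma aux_countIn_add (f : ℕ → ℕ) (a b v : ℕ) :
    countIn f (a + b) v = countIn f a v + countIn (fun j => f (a + j)) b v := by
  induction b with
  | zero => simp [countIn]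
  | succ b ih => rw [← Nat.add_assoc, aux_countIn_succ, ih, aux_countIn_succ, Nat.add_assoc]

lemma aux_countIn_period {f : ℕ → ℕ} {p : ℕ} (hp : IsPeriodicWith f p) (t v : ℕ) :
    countIn f (t + p) v = countIn f t v + countIn f p v := by
  induction t with
  | zero => simp [countIn]
  | succ t ih =>
      have : t + 1 + p = (t + p) + 1 := by omega
      rw [this, aux_countIn_succ, ih, hp, aux_countIn_succ]; omega

lemma aux_two_count {f : ℕ → ℕ} (h : ∀ k, f k = 1 ∨ f k = 2) (n : ℕ) :
    countIn f n 1 + countIn f n 2 = n := by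
  induction n with
  | zero => simp [countIn]
  | succ n ih =>
      rw [aux_countIn_succ, aux_countIn_succ]
      rcases h n with h1 | h1 <;> simp [h1] <;> omega

/-- Core bijection lemma between a subsequence window and its index window. -/
lemma aux_nth_count_Ico (q P : ℕ → Prop) [DecidablePred q] [DecidablePred P]
    (hq : (setOf q).Infinite) (T1 T2 : ℕ) :
    ((Finset.Ico (Nat.count q T1) (Nat.count q T2)).filter P).card
      = ((Finset.Ico T1 T2).filter (fun t => q t ∧ P (Nat.count q t))).card := by
  classical
  symm
  apply Finset.card_bij (fun t _ => Nat.count q t)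
  · rintro t ht
    simp only [Finset.mem_filter, Finset.mem_Ico] at ht ⊢
    obtain ⟨⟨h1, h2⟩, hqt, hPt⟩ := ht
    refine ⟨⟨Nat.count_monotone q h1, ?_⟩, hPt⟩
    have : Nat.count q (t+1) ≤ Nat.count q T2 := Nat.count_monotone q h2
    rw [Nat.count_succ, if_pos hqt] at this
    omega
  · rintro t1 ht1 t2 ht2 h
    simp only [Finset.mem_filter, Finset.mem_Ico] at ht1 ht2
    have e1 := Nat.nth_count ht1.2.1
    have e2 := Nat.nth_count ht2.2.1
    rw [← e1, ← e2, h]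
  · rintro s hs
    simp only [Finset.mem_filter, Finset.mem_Ico] at hs
    obtain ⟨⟨h1, h2⟩, hP⟩ := hs
    refine ⟨Nat.nth q s, ?_, ?_⟩
    · simp only [Finset.mem_filter, Finset.mem_Ico]
      have hqn : q (Nat.nth q s) := Nat.nth_mem_of_infinite hq s
      have hcn : Nat.count q (Nat.nth q s) = s := Nat.count_nth_of_infinite hq s
      refine ⟨⟨?_, ?_⟩, hqn, by rwa [hcn]⟩
      · by_contra hlt
        push_neg at hlt
        have h3 : Nat.count q (Nat.nth q s + 1) ≤ Nat.count q T1 := Nat.count_monotone q hlt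
        rw [Nat.count_succ, if_pos hqn, hcn] at h3
        omega
      · by_contra hge
        push_neg at hge
        have := Nat.count_monotone q hge
        rw [hcn] at this
        omega
    · exact Nat.count_nth_of_infinite hq s

lemma aux_infinite_of_periodic {q : ℕ → Prop} {p t0 : ℕ} (hp : 0 < p)
    (hper : ∀ t, q (t + p) ↔ q t) (h0 : q t0) : (setOf q).Infinite := by
  apply Set.infinite_of_injective_forall_mem (f := fun m : ℕ => t0 + m * p)
  case hi =>
    intro a b hab
    simp only at hab
    have := Nat.eq_of_mul_eq_mul_right hp (by omega : a * p = b * p)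
    omega
  case hf =>
    intro m
    induction m with
    | zero => change q (t0 + 0 * p); simpa using h0
    | succ m ih =>
        have : t0 + (m+1) * p = (t0 + m * p) + p := by ring
        change q (t0 + (m+1) * p)
        rw [this, hper]; exact ih

lemma aux_countIn_Ico (f : ℕ → ℕ) (a b v : ℕ) :
    countIn (fun j => f (a + j)) (b - a) v
      = ((Finset.Ico a b).filter (fun x => f x = v)).card := by
  unfold countIn
  apply Finset.card_bij (fun j _ => a + j)
  · intro j hj; simp only [Finset.mem_filter, Finset.mem_range, Finset.mem_Ico] at *; omega
  · intro j1 _ j2 _ h; omega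
  · intro x hx
    simp only [Finset.mem_filter, Finset.mem_range, Finset.mem_Ico] at hx
    exact ⟨x - a, by
      simp only [Finset.mem_filter, Finset.mem_range]
      constructor
      · omega
      · rw [show a + (x-a) = x by omega]; exact hx.2, by omega⟩

/-- The run conditions of a balanced run decomposition, without positivity/sum. -/
def WeakBRD (f : ℕ → ℕ) (L : List ℕ) : Prop :=
  ∀ i : Fin L.length, countIn (fun j => f ((L.take i.1).sum + j)) (L.get i) 1
                    = countIn (fun j => f ((L.take i.1).sum + j)) (L.get i) 2

lemma weak_congr {f g : ℕ → ℕ} (h : ∀ j, f j = g j) {L : List ℕ} (hw : WeakBRD f L) :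
    WeakBRD g L := by
  intro i
  rw [← aux_countIn_congr (fun j => f ((L.take i.1).sum + j)) _ _ _ (fun j _ => h _),
      ← aux_countIn_congr (fun j => f ((L.take i.1).sum + j)) _ _ 2 (fun j _ => h _)]
  exact hw i

lemma weak_cons_iff {f : ℕ → ℕ} {a : ℕ} {L : List ℕ} :
    WeakBRD f (a :: L) ↔
      (countIn f a 1 = countIn f a 2 ∧ WeakBRD (fun j => f (a + j)) L) := by
  constructor
  · intro h
    constructor
    · have := h ⟨0, by simp⟩
      simpa [aux_countIn_congr (fun j => f (0 + j)) f a 1 (by simp),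
             aux_countIn_congr (fun j => f (0 + j)) f a 2 (by simp)] using this
    · intro i
      have := h ⟨i.1 + 1, by simp [Nat.succ_lt_succ i.2]⟩
      simp only [List.take_succ_cons, List.sum_cons, List.get_cons_succ] at this
      rwa [aux_countIn_congr (fun j => f (a + (L.take i.1).sum + j))
             (fun j => f (a + ((L.take i.1).sum + j))) _ 1 (by intro j _; ring_nf),
           aux_countIn_congr (fun j => f (a + (L.take i.1).sum + j))
             (fun j => f (a + ((L.take i.1).sum + j))) _ 2 (by intro j _; ring_nf)] at this
  · rintro ⟨h1, h2⟩ i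
    match i with
    | ⟨0, _⟩ =>
        simpa [aux_countIn_congr (fun j => f (0 + j)) f a 1 (by simp),
               aux_countIn_congr (fun j => f (0 + j)) f a 2 (by simp)] using h1
    | ⟨i' + 1, hi⟩ =>
        have := h2 ⟨i', by simpa using Nat.lt_of_succ_lt_succ hi⟩
        simp only [List.take_succ_cons, List.sum_cons, List.get_cons_succ]
        rwa [aux_countIn_congr (fun j => f (a + (L.take i').sum + j))
               (fun j => f (a + ((L.take i').sum + j))) _ 1 (by intro j _; ring_nf),
             aux_countIn_congr (fun j => f (a + (L.take i').sum + j))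
               (fun j => f (a + ((L.take i').sum + j))) _ 2 (by intro j _; ring_nf)]

lemma weak_filter {L : List ℕ} : ∀ {f : ℕ → ℕ}, WeakBRD f L →
    WeakBRD f (L.filter (fun x => x ≠ 0)) ∧ (L.filter (fun x => x ≠ 0)).sum = L.sum := by
  induction L with
  | nil => intro f _; exact ⟨fun i => absurd i.2 (by simp), by simp⟩
  | cons a L ih =>
      intro f h
      rw [weak_cons_iff] at h
      obtain ⟨hhead, htail⟩ := h
      obtain ⟨w', s'⟩ := ih htail
      by_cases ha : a = 0
      · subst ha
        rw [List.filter_cons_of_neg (by simp)]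
        refine ⟨weak_congr (by simp) w', by simpa using s'⟩
      · rw [List.filter_cons_of_pos (by simpa using ha)]
        refine ⟨weak_cons_iff.2 ⟨hhead, w'⟩, ?_⟩
        simp only [List.sum_cons, s']

lemma aux_length_le_sum (L : List ℕ) (h : ∀ a ∈ L, 0 < a) : L.length ≤ L.sum := by
  induction L with
  | nil => simp
  | cons a L ih =>
      simp only [List.length_cons, List.sum_cons]
      have := ih (fun b hb => h b (by simp [hb]))
      have := h a (by simp)
      omega

lemma aux_maxBRD_ge {f : ℕ → ℕ} {p : ℕ} {L : List ℕ} (h : IsBRD f p L) :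
    L.length ≤ maxBRD f p := by
  apply le_csSup
  · refine ⟨p, ?_⟩
    rintro m ⟨L', hL', rfl⟩
    have h2 := aux_length_le_sum L' hL'.2.1
    have h3 := hL'.1
    omega
  · exact ⟨L, h, rfl⟩

lemma aux_maxBRD_attained {f : ℕ → ℕ} {p : ℕ} (hne : ∃ L, IsBRD f p L) :
    ∃ L, IsBRD f p L ∧ L.length = maxBRD f p := by
  obtain ⟨L0, hL0⟩ := hne
  exact Nat.sSup_mem (s := {m | ∃ L : List ℕ, IsBRD f p L ∧ L.length = m})
    ⟨L0.length, L0, hL0, rfl⟩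
    ⟨p, by
      rintro m ⟨L', hL', rfl⟩
      have h2 := aux_length_le_sum L' hL'.2.1
      have h3 := hL'.1
      omega⟩

lemma aux_sum_map_range (d : ℕ → ℕ) (hmono : Monotone d) (h0 : d 0 = 0) (i : ℕ) :
    (((List.range i).map (fun j => d (j+1) - d j))).sum = d i := by
  induction i with
  | zero => simpa using h0.symm
  | succ i ih =>
      rw [List.range_succ, List.map_append, List.sum_append]
      simp only [List.map_cons, List.map_nil, List.sum_cons, List.sum_nil, ih]
      have := hmono (Nat.le_succ i)
      simp only [Nat.succ_eq_add_one] at *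
      omega

lemma aux_take_map_range (E : ℕ → ℕ) (m i : ℕ) (h : i ≤ m) :
    ((List.range m).map E).take i = (List.range i).map E := by
  rw [← List.map_take, List.take_range]
  rw [min_eq_left h]

lemma aux_filter_two (P Q : ℕ → Prop) (l : List ℕ) (h : ∀ x ∈ l, P x ∨ Q x) :
    l.length ≤ (l.filter (fun x => P x)).length + (l.filter (fun x => Q x)).length := by
  induction l with
  | nil => simp
  | cons a l ih =>
      have hih := ih (fun x hx => h x (by simp [hx]))
      rcases h a (by simp) with hP | hQ
      · rw [List.filter_cons_of_pos (by simpa using hP)]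
        simp only [List.length_cons]
        rcases Classical.em (Q a) with hQ2 | hQ2
        · rw [List.filter_cons_of_pos (by simpa using hQ2)]; simp; omega
        · rw [List.filter_cons_of_neg (by simpa using hQ2)]; simp; omega
      · rw [List.filter_cons_of_pos (p := fun x => decide (Q x)) (by simpa using hQ)]
        simp only [List.length_cons]
        rcases Classical.em (P a) with hP2 | hP2
        · rw [List.filter_cons_of_pos (by simpa using hP2)]; simp only [List.length_cons]; omega
        · rw [List.filter_cons_of_neg (by simpa using hP2)]; omega

lemma aux_split (r : ℕ → ℕ) (htwo : ∀ t, r t = 1 ∨ r t = 2) (q : ℕ → Prop)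
    (s : Finset ℕ) :
    (s.filter q).card = (s.filter (fun t => q t ∧ r t = 1)).card
      + (s.filter (fun t => q t ∧ r t = 2)).card := by
  classical
  rw [← Finset.card_filter_add_card_filter_not
        (s := s.filter q) (p := fun t => r t = 1),
      Finset.filter_filter, Finset.filter_filter]
  congr 1
  apply Finset.card_bij (fun a _ => a)
  · intro a ha
    simp only [Finset.mem_filter] at *
    rcases htwo a with h1 | h1 <;> simp_all
  · intro a _ b _ hab; exact hab
  · intro b hb
    refine ⟨b, ?_, rfl⟩
    simp only [Finset.mem_filter] at *
    rcases htwo b with h1 | h1 <;> simp_all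

lemma aux_count_compl (q q' : ℕ → Prop) [DecidablePred q] [DecidablePred q']
    (h : ∀ t, q' t ↔ ¬ q t) (T : ℕ) : Nat.count q T + Nat.count q' T = T := by
  induction T with
  | zero => simp
  | succ T ih =>
      rw [Nat.count_succ, Nat.count_succ]
      by_cases hq : q T
      · rw [if_pos hq, if_neg (by rw [h]; exact not_not_intro hq)]; omega
      · rw [if_neg hq, if_pos ((h T).2 hq)]; omega

lemma aux_card_filter_congr {s : Finset ℕ} {p q : ℕ → Prop} {ip : DecidablePred p}
    {iq : DecidablePred q} (h : ∀ x ∈ s, p x ↔ q x) :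
    (@Finset.filter _ p ip s).card = (@Finset.filter _ q iq s).card := by
  apply Finset.card_bij (fun a _ => a)
  · intro a ha
    simp only [Finset.mem_filter] at *
    exact ⟨ha.1, (h a ha.1).1 ha.2⟩
  · intro a _ b _ hab; exact hab
  · intro b hb
    simp only [Finset.mem_filter] at hb
    exact ⟨b, by simp only [Finset.mem_filter]; exact ⟨hb.1, (h b hb.1).2 hb.2⟩, rfl⟩

lemma aux_count_irrel (q : ℕ → Prop) (i1 i2 : DecidablePred q) (n : ℕ) :
    @Nat.count q i1 n = @Nat.count q i2 n := by
  rw [Nat.count_eq_card_filter_range, Nat.count_eq_card_filter_range]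
  exact aux_card_filter_congr (fun x _ => Iff.rfl)

/-- The window-count transfer lemma: occurrences of the event `q` whose source value is
`v` within a step window correspond to occurrences of the state `w` in the corresponding
rotor-reading window. -/
lemma aux_chunk (r : ℕ → ℕ) (q : ℕ → Prop) (v w T1 T2 : ℕ)
    (hvinf : (setOf fun t => r t = v).Infinite)
    (hqiff : ∀ t, r t = v → (q t ↔ r (countIn r t v) = w)) :
    ((Finset.Ico T1 T2).filter (fun t => q t ∧ r t = v)).card
      = ((Finset.Ico (countIn r T1 v) (countIn r T2 v)).filter (fun s => r s = w)).card := by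
  classical
  rw [aux_countIn_eq_count r T1 v, aux_countIn_eq_count r T2 v,
      aux_nth_count_Ico (fun t => r t = v) (fun s => r s = w) hvinf T1 T2]
  congr 1
  apply Finset.filter_congr
  intro t _
  constructor
  · rintro ⟨hq, hv⟩
    refine ⟨hv, ?_⟩
    rw [← aux_countIn_eq_count]
    exact (hqiff t hv).1 hq
  · rintro ⟨hv, hw⟩
    refine ⟨(hqiff t hv).2 ?_, hv⟩
    rw [aux_countIn_eq_count]
    exact hw

/-- The main construction: from a list of balanced step-windows, produce a balanced run
decomposition of the hitting subsequence `g` extracted along `q`. -/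
lemma aux_side (r g : ℕ → ℕ) (q : ℕ → Prop) [DecidablePred q] (p w : ℕ) (M : List ℕ)
    (hqinf : (setOf q).Infinite)
    (h1inf : (setOf fun t => r t = 1).Infinite)
    (h2inf : (setOf fun t => r t = 2).Infinite)
    (hval : ∀ t, q t → g (Nat.count q t) = r t)
    (hqiff1 : ∀ t, r t = 1 → (q t ↔ r (countIn r t 1) = w))
    (hqiff2 : ∀ t, r t = 2 → (q t ↔ r (countIn r t 2) = w))
    (hMbal : ∀ i ≤ M.length, countIn r ((M.take i).sum) 1 = countIn r ((M.take i).sum) 2)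
    (hsum : Nat.count q M.sum = p) :
    ∃ LL : List ℕ, IsBRD g p LL ∧
      ((List.range M.length).filter
        (fun j => Nat.count q ((M.take (j+1)).sum) - Nat.count q ((M.take j).sum) ≠ 0)).length
        ≤ LL.length := by
  classical
  set d : ℕ → ℕ := fun i => Nat.count q ((M.take i).sum) with hd
  have hcmono : Monotone (fun i => (M.take i).sum) := by
    apply monotone_nat_of_le_succ
    intro i
    by_cases h : i < M.length
    · rw [List.sum_take_succ _ _ h]; omega
    · rw [List.take_of_length_le (le_of_not_gt h), List.take_of_length_le (by omega)]
  have hdmono : Monotone d := fun a b hab => Nat.count_monotone q (hcmono hab)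
  have hd0 : d 0 = 0 := by simp [hd]
  set E : ℕ → ℕ := fun j => d (j+1) - d j with hE
  have hweak : WeakBRD g ((List.range M.length).map E) := by
    intro i
    have hilen : i.1 < M.length := by simpa using i.2
    have htake : ((((List.range M.length).map E)).take i.1).sum = d i.1 := by
      rw [aux_take_map_range E _ _ (le_of_lt hilen), aux_sum_map_range d hdmono hd0]
    have hget : ((List.range M.length).map E).get i = E i.1 := by simp
    rw [htake, hget]
    have key : ∀ v, (∀ t, r t = v → (q t ↔ r (countIn r t v) = w)) →
        (setOf fun t => r t = v).Infinite →
        ((Finset.Ico (d i.1) (d (i.1+1))).filter (fun s => g s = v)).card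
          = ((Finset.Ico (countIn r ((M.take i.1).sum) v)
              (countIn r ((M.take (i.1+1)).sum) v)).filter (fun s => r s = w)).card := by
      intro v hiff hvinf
      rw [hd]
      simp only
      rw [aux_nth_count_Ico q (fun s => g s = v) hqinf]
      rw [← aux_chunk r q v w _ _ hvinf hiff]
      apply aux_card_filter_congr
      intro t _
      constructor
      · rintro ⟨hq, hgv⟩; exact ⟨hq, by rwa [hval t hq] at hgv⟩
      · rintro ⟨hq, hrv⟩; exact ⟨hq, by rw [hval t hq]; exact hrv⟩
    have hEexp : E i.1 = d (i.1+1) - d i.1 := rfl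
    rw [hEexp, aux_countIn_Ico g (d i.1) (d (i.1+1)) 1,
        aux_countIn_Ico g (d i.1) (d (i.1+1)) 2]
    rw [key 1 hqiff1 h1inf, key 2 hqiff2 h2inf,
        hMbal i.1 (le_of_lt hilen), hMbal (i.1+1) hilen]
  obtain ⟨hwf, hws⟩ := weak_filter hweak
  refine ⟨((List.range M.length).map E).filter (fun x => x ≠ 0), ⟨?_, ?_, hwf⟩, ?_⟩
  · rw [hws, aux_sum_map_range d hdmono hd0 M.length]
    rw [hd]
    simp only
    rw [List.take_of_length_le (le_refl _)]
    exact hsum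
  · intro a ha
    rw [List.mem_filter] at ha
    have := ha.2
    simp only [ne_eq, decide_not, Bool.not_eq_true', decide_eq_false_iff_not] at this
    omega
  · apply le_of_eq
    rw [List.filter_map, List.length_map]
    rfl

/-- For a balanced two-state rotor type `r` of period `p`,
`b(UU(r)) + b(DD(r)) ≥ 2·b(r)`, the balance coefficients of `UU(r)` and `DD(r)` being
computed with respect to period length `p` (targets identified with `1, 2`). -/
theorem statement10 (r : ℕ → ℕ) (p : ℕ) (h2 : TwoState r) (hmin : IsMinimalPeriod r p)
    (hbal : countIn r p 1 = countIn r p 2) :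
    2 * balCoeff r p ≤ balCoeff (UUop r) p + balCoeff (DDop r) p := by
  classical
  obtain ⟨hp, hper, -⟩ := hmin
  obtain ⟨htwo, ⟨u1, hu1⟩, ⟨u2, hu2⟩⟩ := h2
  have h1inf : (setOf fun t => r t = 1).Infinite :=
    aux_infinite_of_periodic hp (fun t => by simp only [Set.mem_setOf_eq, hper t]) hu1
  have h2inf : (setOf fun t => r t = 2).Infinite :=
    aux_infinite_of_periodic hp (fun t => by simp only [Set.mem_setOf_eq, hper t]) hu2
  have hpp := aux_two_count htwo p
  have hF2p : countIn r (p + p) 1 = p := by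
    rw [aux_countIn_period hper]; omega
  have hG2p : countIn r (p + p) 2 = p := by
    rw [aux_countIn_period hper]; omega
  have hFshift : ∀ t, countIn r (t + (p + p)) 1 = countIn r t 1 + p := by
    intro t
    rw [← Nat.add_assoc, aux_countIn_period hper, aux_countIn_period hper]; omega
  have hGshift : ∀ t, countIn r (t + (p + p)) 2 = countIn r t 2 + p := by
    intro t
    rw [← Nat.add_assoc, aux_countIn_period hper, aux_countIn_period hper]; omega
  have hr2 : ∀ t, r (t + (p + p)) = r t := by
    intro t; rw [← Nat.add_assoc, hper, hper]
  have hhit : ∀ (X Y : Bool) (t : ℕ), hitAt X Y r (t + (p + p)) = hitAt X Y r t := by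
    intro X Y t
    unfold hitAt
    rw [hr2 t, hFshift t, hGshift t, hper (countIn r t 1), hper (countIn r t 2)]
  -- characterizations of hits
  have hqiffU1 : ∀ t, r t = 1 →
      (((hitAt true true r t).isSome = true) ↔ r (countIn r t 1) = 2) := by
    intro t h1
    unfold hitAt
    rw [if_pos h1]
    rcases htwo (countIn r t 1) with hw | hw <;> simp [hw]
  have hqiffU2 : ∀ t, r t = 2 →
      (((hitAt true true r t).isSome = true) ↔ r (countIn r t 2) = 2) := by
    intro t h1
    unfold hitAt
    rw [if_neg (by rw [h1]; omega)]
    rcases htwo (countIn r t 2) with hw | hw <;> simp [hw]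
  have hqiffD1 : ∀ t, r t = 1 →
      (((hitAt false false r t).isSome = true) ↔ r (countIn r t 1) = 1) := by
    intro t h1
    unfold hitAt
    rw [if_pos h1]
    rcases htwo (countIn r t 1) with hw | hw <;> simp [hw]
  have hqiffD2 : ∀ t, r t = 2 →
      (((hitAt false false r t).isSome = true) ↔ r (countIn r t 2) = 1) := by
    intro t h1
    unfold hitAt
    rw [if_neg (by rw [h1]; omega)]
    rcases htwo (countIn r t 2) with hw | hw <;> simp [hw]
  have hqDcompl : ∀ t, ((hitAt false false r t).isSome = true) ↔
      ¬ ((hitAt true true r t).isSome = true) := by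
    intro t
    rcases htwo t with h1 | h1
    · rw [hqiffU1 t h1, hqiffD1 t h1]
      rcases htwo (countIn r t 1) with hw | hw <;> simp [hw]
    · rw [hqiffU2 t h1, hqiffD2 t h1]
      rcases htwo (countIn r t 2) with hw | hw <;> simp [hw]
  -- total number of hits over a double period
  have hcount : ∀ (q : ℕ → Prop) (inst : DecidablePred q) (w : ℕ),
      (∀ t, r t = 1 → (q t ↔ r (countIn r t 1) = w)) →
      (∀ t, r t = 2 → (q t ↔ r (countIn r t 2) = w)) → (w = 1 ∨ w = 2) →
      @Nat.count q inst (p + p) = p := by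
    intro q inst w hiff1 hiff2 hw
    rw [aux_count_irrel q inst (fun a => Classical.propDecidable (q a))]
    rw [Nat.count_eq_card_filter_range, Finset.range_eq_Ico,
        aux_split r htwo q (Finset.Ico 0 (p+p)),
        aux_chunk r q 1 w 0 (p+p) h1inf hiff1,
        aux_chunk r q 2 w 0 (p+p) h2inf hiff2]
    have e1 : countIn r 0 1 = 0 := by simp [countIn]
    have e2 : countIn r 0 2 = 0 := by simp [countIn]
    rw [e1, e2, hF2p, hG2p]
    have e3 : ((Finset.Ico 0 p).filter (fun s => r s = w)).card = countIn r p w := by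
      rw [← Finset.range_eq_Ico]; rfl
    rw [e3]
    rcases hw with h | h <;> subst h <;> omega
  have hUcount : Nat.count (fun t => (hitAt true true r t).isSome = true) (p + p) = p :=
    hcount _ _ 2 hqiffU1 hqiffU2 (Or.inr rfl)
  have hDcount : Nat.count (fun t => (hitAt false false r t).isSome = true) (p + p) = p :=
    hcount _ _ 1 hqiffD1 hqiffD2 (Or.inl rfl)
  -- infinitude of hits
  have hex : ∀ (q : ℕ → Prop) (inst : DecidablePred q),
      @Nat.count q inst (p + p) = p → ∃ t, q t := by
    intro q inst hc
    by_contra h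
    push_neg at h
    have h0 : @Nat.count q inst (p + p) = 0 := by
      rw [Nat.count_eq_card_filter_range, Finset.filter_false_of_mem (fun x _ => h x)]
      simp
    omega
  obtain ⟨tU, htU⟩ := hex _ _ hUcount
  obtain ⟨tD, htD⟩ := hex _ _ hDcount
  have hUinf : (setOf fun t => (hitAt true true r t).isSome = true).Infinite :=
    aux_infinite_of_periodic (by omega : 0 < p + p)
      (fun t => by simp only [Set.mem_setOf_eq, hhit true true t]) htU
  have hDinf : (setOf fun t => (hitAt false false r t).isSome = true).Infinite :=
    aux_infinite_of_periodic (by omega : 0 < p + p)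
      (fun t => by simp only [Set.mem_setOf_eq, hhit false false t]) htD
  -- values of the hit sequences
  have hvalU : ∀ t, ((hitAt true true r t).isSome = true) →
      UUop r (Nat.count (fun t => (hitAt true true r t).isSome = true) t) = r t := by
    intro t hq
    unfold UUop compOp compSeq
    rw [Nat.nth_count hq]
    rcases htwo t with h1 | h1
    · have hw := (hqiffU1 t h1).1 hq
      unfold hitAt
      rw [if_pos h1, hw]
      simp [h1]
    · have hw := (hqiffU2 t h1).1 hq
      unfold hitAt
      rw [if_neg (by rw [h1]; omega), hw]
      simp [h1]
  have hvalD : ∀ t, ((hitAt false false r t).isSome = true) →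
      DDop r (Nat.count (fun t => (hitAt false false r t).isSome = true) t) = r t := by
    intro t hq
    unfold DDop compOp compSeq
    rw [Nat.nth_count hq]
    rcases htwo t with h1 | h1
    · have hw := (hqiffD1 t h1).1 hq
      unfold hitAt
      rw [if_pos h1, hw]
      simp [h1]
    · have hw := (hqiffD2 t h1).1 hq
      unfold hitAt
      rw [if_neg (by rw [h1]; omega), hw]
      simp [h1]
  -- a maximal BRD of r
  have hBRDr : IsBRD r p [p] := by
    refine ⟨by simp, by simp [hp], ?_⟩
    rintro ⟨i, hi⟩
    simp only [List.length_singleton] at hi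
    interval_cases i
    simpa using hbal
  obtain ⟨L, hL, hLlen⟩ := aux_maxBRD_attained ⟨[p], hBRDr⟩
  obtain ⟨hLsum, hLpos, hLrun⟩ := hL
  -- runs of the doubled list are balanced
  have hMrun : ∀ i : Fin (L ++ L).length,
      countIn (fun j => r (((L ++ L).take i.1).sum + j)) ((L ++ L).get i) 1 =
      countIn (fun j => r (((L ++ L).take i.1).sum + j)) ((L ++ L).get i) 2 := by
    rintro ⟨i, hi⟩
    have hi2 : i < L.length + L.length := by simpa [List.length_append] using hi
    simp only [List.get_eq_getElem]
    by_cases hik : i < L.length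
    · have ht : (L ++ L).take i = L.take i := List.take_append_of_le_length (le_of_lt hik)
      have hg : (L ++ L)[i] = L[i] := List.getElem_append_left hik
      rw [ht, hg]
      have := hLrun ⟨i, hik⟩
      simpa using this
    · obtain ⟨i', rfl⟩ : ∃ i', i = L.length + i' := ⟨i - L.length, by omega⟩
      have hi' : i' < L.length := by omega
      have ht : (L ++ L).take (L.length + i') = L ++ L.take i' := List.take_length_add_append i'
      have hg : (L ++ L)[L.length + i'] = L[i'] := by
        rw [List.getElem_append_right (by omega)]
        congr 1
        omega
      rw [ht, hg, List.sum_append, hLsum]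
      have hrun := hLrun ⟨i', hi'⟩
      simp only [List.get_eq_getElem] at hrun
      have hshift : ∀ v, countIn (fun j => r (p + (L.take i').sum + j)) L[i'] v
          = countIn (fun j => r ((L.take i').sum + j)) L[i'] v := by
        intro v
        apply aux_countIn_congr
        intro j _
        rw [show p + (L.take i').sum + j = ((L.take i').sum + j) + p by ring, hper]
      rw [hshift 1, hshift 2]
      exact hrun
  -- prefix sums of the doubled list are balanced
  have hMbal : ∀ i, i ≤ (L ++ L).length →
      countIn r (((L ++ L).take i).sum) 1 = countIn r (((L ++ L).take i).sum) 2 := by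
    intro i
    induction i with
    | zero => intro _; simp [countIn]
    | succ i ih =>
        intro hi
        have hi' : i < (L ++ L).length := by omega
        rw [List.sum_take_succ _ _ hi', aux_countIn_add, aux_countIn_add, ih (by omega)]
        have hrun := hMrun ⟨i, hi'⟩
        simp only [List.get_eq_getElem] at hrun
        rw [hrun]
  -- apply the main construction to both sides
  obtain ⟨LLU, hLLU, hlenU⟩ := aux_side r (UUop r)
    (fun t => (hitAt true true r t).isSome = true) p 2 (L ++ L)
    hUinf h1inf h2inf hvalU hqiffU1 hqiffU2 hMbal
    (by rw [List.sum_append, hLsum]; exact hUcount)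
  obtain ⟨LLD, hLLD, hlenD⟩ := aux_side r (DDop r)
    (fun t => (hitAt false false r t).isSome = true) p 1 (L ++ L)
    hDinf h1inf h2inf hvalD hqiffD1 hqiffD2 hMbal
    (by rw [List.sum_append, hLsum]; exact hDcount)
  -- the two families of chunks cover all runs
  have hcov : (L ++ L).length ≤
      ((List.range (L ++ L).length).filter
        (fun j => Nat.count (fun t => (hitAt true true r t).isSome = true)
            (((L ++ L).take (j+1)).sum)
          - Nat.count (fun t => (hitAt true true r t).isSome = true)
            (((L ++ L).take j).sum) ≠ 0)).length
      + ((List.range (L ++ L).length).filter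
        (fun j => Nat.count (fun t => (hitAt false false r t).isSome = true)
            (((L ++ L).take (j+1)).sum)
          - Nat.count (fun t => (hitAt false false r t).isSome = true)
            (((L ++ L).take j).sum) ≠ 0)).length := by
    have := aux_filter_two
      (fun j => Nat.count (fun t => (hitAt true true r t).isSome = true)
          (((L ++ L).take (j+1)).sum)
        - Nat.count (fun t => (hitAt true true r t).isSome = true)
          (((L ++ L).take j).sum) ≠ 0)
      (fun j => Nat.count (fun t => (hitAt false false r t).isSome = true)
          (((L ++ L).take (j+1)).sum)
        - Nat.count (fun t => (hitAt false false r t).isSome = true)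
          (((L ++ L).take j).sum) ≠ 0)
      (List.range (L ++ L).length) ?_
    · simpa using this
    · intro j hj
      rw [List.mem_range] at hj
      by_contra hcon
      push_neg at hcon
      obtain ⟨hPU, hPD⟩ := hcon
      have hc1 : (((L ++ L).take (j+1)).sum) = (((L ++ L).take j).sum) + (L ++ L)[j] :=
        List.sum_take_succ _ _ hj
      have hpos : 0 < (L ++ L)[j] := by
        apply hLpos
        have := List.getElem_mem (l := L ++ L) (n := j) (h := hj)
        rcases List.mem_append.1 this with h | h <;> exact h
      have hmU : Nat.count (fun t => (hitAt true true r t).isSome = true)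
          (((L ++ L).take j).sum) ≤ Nat.count (fun t => (hitAt true true r t).isSome = true)
          (((L ++ L).take (j+1)).sum) := Nat.count_monotone _ (by omega)
      have hmD : Nat.count (fun t => (hitAt false false r t).isSome = true)
          (((L ++ L).take j).sum) ≤ Nat.count (fun t => (hitAt false false r t).isSome = true)
          (((L ++ L).take (j+1)).sum) := Nat.count_monotone _ (by omega)
      have hs1 := aux_count_compl _ _ hqDcompl (((L ++ L).take j).sum)
      have hs2 := aux_count_compl _ _ hqDcompl (((L ++ L).take (j+1)).sum)
      omega
  have hfinal : 2 * maxBRD r p ≤ maxBRD (UUop r) p + maxBRD (DDop r) p := by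
    have hU := aux_maxBRD_ge hLLU
    have hD := aux_maxBRD_ge hLLD
    have hlen : (L ++ L).length = L.length + L.length := List.length_append
    omega
  -- conclude
  unfold balCoeff
  rw [← add_div]
  rw [show (2 : ℚ) * ((maxBRD r p : ℚ) / (p : ℚ))
      = ((2 * maxBRD r p : ℕ) : ℚ) / (p : ℚ) by push_cast; ring]
  have hp' : (0:ℚ) < (p : ℚ) := by exact_mod_cast hp
  rw [div_le_div_iff₀ hp' hp']
  have hc : ((2 * maxBRD r p : ℕ) : ℚ) ≤ ((maxBRD (UUop r) p : ℕ) : ℚ) + ((maxBRD (DDop r) p : ℕ) : ℚ) := by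
    exact_mod_cast hfinal
  exact mul_le_mul_of_nonneg_right hc hp'.le
end

section
/- Let r be a balanced two-state rotor type with period 2n. If UD(r), regarded as a periodic sequence with period length 2n, is palindromic (its k-th term equals its (2n+1−k)-th term for all 1 ≤ k ≤ 2n), then r starts and ends with the same state: r(1) = r(2n). -/
open scoped Classical

section Aux

open scoped Classical in
private lemma countIn_eq_count (f : ℕ → ℕ) (N v : ℕ) :
    countIn f N v = Nat.count (fun k => f k = v) N := by
  rw [Nat.count_eq_card_filter_range]
  rfl

private lemma count_congr' {p q : ℕ → Prop} [DecidablePred p] [DecidablePred q]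
    (h : ∀ t, p t ↔ q t) (N : ℕ) : Nat.count p N = Nat.count q N := by
  induction N with
  | zero => simp
  | succ N ih =>
    rw [Nat.count_succ, Nat.count_succ, ih]
    by_cases hp : p N
    · rw [if_pos hp, if_pos ((h N).1 hp)]
    · rw [if_neg hp, if_neg (fun hq => hp ((h N).2 hq))]

private lemma count_or_disjoint {A B : ℕ → Prop} [DecidablePred A] [DecidablePred B]
    (h : ∀ t, ¬(A t ∧ B t)) (N : ℕ) :
    Nat.count (fun t => A t ∨ B t) N = Nat.count A N + Nat.count B N := by
  classical
  induction N with
  | zero => simp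
  | succ N ih =>
    rw [Nat.count_succ, Nat.count_succ, Nat.count_succ,
      count_congr' (q := fun t => A t ∨ B t) (fun t => Iff.rfl), ih]
    by_cases hA : A N <;> by_cases hB : B N
    · exact absurd ⟨hA, hB⟩ (h N)
    · simp [hA, hB]; omega
    · simp [hA, hB]; omega
    · simp [hA, hB]

private lemma count_add_count {p q : ℕ → Prop} [DecidablePred p] [DecidablePred q]
    (h : ∀ t, p t ∨ q t) (h' : ∀ t, ¬(p t ∧ q t)) (N : ℕ) :
    Nat.count p N + Nat.count q N = N := by
  induction N with
  | zero => simp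
  | succ N ih =>
    rw [Nat.count_succ, Nat.count_succ]
    rcases h N with hN | hN
    · rw [if_pos hN, if_neg (fun hq => h' N ⟨hN, hq⟩)]; omega
    · rw [if_neg (fun hp => h' N ⟨hp, hN⟩), if_pos hN]; omega

private lemma count_eq_one_of {q : ℕ → Prop} [DecidablePred q] {m : ℕ} (hm : 0 < m)
    (h0 : q 0) (h : ∀ k, 0 < k → k < m → ¬ q k) : Nat.count q m = 1 := by
  obtain ⟨m', rfl⟩ : ∃ m', m = 1 + m' := ⟨m - 1, by omega⟩
  rw [Nat.count_add, Nat.count_one, if_pos h0, Nat.count_of_forall_not ?_]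
  intro k hk
  exact h (1 + k) (by omega) (by omega)

private lemma count_comp_filter (p q : ℕ → Prop) [DecidablePred p] [DecidablePred q]
    (hp : (setOf p).Infinite) (N : ℕ) :
    Nat.count (fun t => p t ∧ q (Nat.count p t)) N = Nat.count q (Nat.count p N) := by
  classical
  rw [Nat.count_eq_card_filter_range, Nat.count_eq_card_filter_range (p := q)]
  apply Finset.card_bij (fun t _ => Nat.count p t)
  · intro t ht
    simp only [Finset.mem_filter, Finset.mem_range] at ht ⊢
    refine ⟨?_, ht.2.2⟩
    have h1 : Nat.count p (t + 1) ≤ Nat.count p N := Nat.count_monotone _ (by omega)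
    have h2 : Nat.count p (t + 1) = Nat.count p t + 1 := by
      rw [Nat.count_succ, if_pos ht.2.1]
    omega
  · intro a ha b hb hab
    simp only [Finset.mem_filter, Finset.mem_range] at ha hb
    exact Nat.count_injective ha.2.1 hb.2.1 hab
  · intro k hk
    simp only [Finset.mem_filter, Finset.mem_range] at hk
    refine ⟨Nat.nth p k, ?_, Nat.count_nth_of_infinite hp k⟩
    simp only [Finset.mem_filter, Finset.mem_range]
    refine ⟨Nat.nth_lt_of_lt_count hk.1, Nat.nth_mem_of_infinite hp k, ?_⟩
    rw [Nat.count_nth_of_infinite hp k]; exact hk.2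

private lemma setOf_infinite_of_periodic {r : ℕ → ℕ} {d : ℕ} (hd : 0 < d)
    (hper : ∀ k, r (k + d) = r k) {v k0 : ℕ} (h0 : r k0 = v) :
    {t | r t = v}.Infinite := by
  have hm : ∀ m, r (k0 + m * d) = v := by
    intro m
    induction m with
    | zero => simpa using h0
    | succ m ih => rw [Nat.succ_mul, ← Nat.add_assoc, hper]; exact ih
  exact Set.infinite_of_injective_forall_mem
    (f := fun m : ℕ => k0 + m * d)
    (fun a b hab => Nat.eq_of_mul_eq_mul_right hd (Nat.add_left_cancel hab))
    (fun m => hm m)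

open scoped Classical in
private lemma hitAt_eq (r : ℕ → ℕ) (t : ℕ) :
    hitAt true false r t =
      if r t = 1 then
        (if r (Nat.count (fun k => r k = 1) t) = 1 then none else some 4)
      else (if r (Nat.count (fun k => r k = 2) t) = 1 then some 5 else none) := by
  unfold hitAt
  rw [countIn_eq_count, countIn_eq_count]
  by_cases h1 : r t = 1
  · by_cases h2 : r (Nat.count (fun k => r k = 1) t) = 1 <;> simp [h1, h2]
  · by_cases h2 : r (Nat.count (fun k => r k = 2) t) = 1 <;> simp [h1, h2]

end Aux

/-- If `r` is a balanced two-state rotor type of period `2n` and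
`UD(r)`, regarded as a periodic sequence of period length `2n`, is palindromic, then `r`
starts and ends with the same state: `r(1) = r(2n)` (0-based: `r 0 = r (2n-1)`). -/
theorem statement15 (r : ℕ → ℕ) (n : ℕ) (hn : 0 < n) (h2 : TwoState r)
    (hmin : IsMinimalPeriod r (2 * n))
    (hbal : countIn r (2 * n) 1 = countIn r (2 * n) 2)
    (hpal : Palindromic (UDseq r) (2 * n)) :
    r 0 = r (2 * n - 1) := by
  classical
  obtain ⟨htwo, ⟨k1, hk1⟩, ⟨k2, hk2⟩⟩ := h2
  obtain ⟨-, hper, -⟩ := hmin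
  have hnn : 0 < 2 * n := by omega
  -- basic periodicity facts
  have hperm : ∀ m k, r (k + m * (2 * n)) = r k := by
    intro m
    induction m with
    | zero => intro k; simp
    | succ m ih => intro k; rw [Nat.succ_mul, ← Nat.add_assoc, hper]; exact ih k
  have hmod : ∀ k, r (k % (2 * n)) = r k := by
    intro k
    have h := hperm (k / (2 * n)) (k % (2 * n))
    rw [Nat.mod_add_div' k (2 * n)] at h
    exact h.symm
  -- the two state-indicator predicates
  set p1 : ℕ → Prop := fun t => r t = 1 with hp1def
  set p2 : ℕ → Prop := fun t => r t = 2 with hp2def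
  have hinf1 : (setOf p1).Infinite := setOf_infinite_of_periodic hnn hper hk1
  have hinf2 : (setOf p2).Infinite := setOf_infinite_of_periodic hnn hper hk2
  have hexcl : ∀ t, ¬(p1 t ∧ p2 t) := by
    intro t ht; have := ht.1; have := ht.2; simp [hp1def, hp2def] at *; omega
  have hc12 : ∀ N, Nat.count p1 N + Nat.count p2 N = N :=
    count_add_count (fun t => htwo t) hexcl
  have hbal' : Nat.count p1 (2 * n) = Nat.count p2 (2 * n) := by
    have h1 := countIn_eq_count r (2 * n) 1
    have h2 := countIn_eq_count r (2 * n) 2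
    rw [h1, h2] at hbal; exact hbal
  have hc1n : Nat.count p1 (2 * n) = n := by have := hc12 (2 * n); omega
  have hc2n : Nat.count p2 (2 * n) = n := by have := hc12 (2 * n); omega
  set T : ℕ := 2 * n + 2 * n with hTdef
  have hshift1 : Nat.count (fun k => p1 (2 * n + k)) (2 * n) = Nat.count p1 (2 * n) := by
    apply count_congr'
    intro k
    show r (2 * n + k) = 1 ↔ r k = 1
    rw [Nat.add_comm (2 * n) k, hper k]
  have hshift2 : Nat.count (fun k => p2 (2 * n + k)) (2 * n) = Nat.count p2 (2 * n) := by
    apply count_congr'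
    intro k
    show r (2 * n + k) = 2 ↔ r k = 2
    rw [Nat.add_comm (2 * n) k, hper k]
  have hc1T : Nat.count p1 T = 2 * n := by
    have := Nat.count_add (p := p1) (2 * n) (2 * n)
    rw [hTdef]; omega
  have hc2T : Nat.count p2 T = 2 * n := by
    have := Nat.count_add (p := p2) (2 * n) (2 * n)
    rw [hTdef]; omega
  -- the hitting predicate
  set H : ℕ → Prop := fun t => (hitAt true false r t).isSome = true with hHdef
  have hUDdef : ∀ k, UDseq r k = (hitAt true false r (Nat.nth H k)).getD 4 := fun k => rfl
  have hH : ∀ t, H t ↔ ((r t = 1 ∧ r (Nat.count p1 t) = 2) ∨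
      (r t = 2 ∧ r (Nat.count p2 t) = 1)) := by
    intro t
    show (hitAt true false r t).isSome = true ↔ _
    rw [hitAt_eq]
    rcases htwo t with h | h
    · rcases htwo (Nat.count p1 t) with h' | h' <;> (simp only [hp1def] at h' ⊢; simp [h, h'])
    · rcases htwo (Nat.count p2 t) with h' | h' <;> simp [hp1def, hp2def, h, h']
  -- total number of hits in [0, T) is 2n
  have hcHT : Nat.count H T = 2 * n := by
    have e1 : Nat.count H T =
        Nat.count (fun t => (p1 t ∧ p2 (Nat.count p1 t)) ∨ (p2 t ∧ p1 (Nat.count p2 t))) T :=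
      count_congr' (fun t => (hH t)) T
    rw [e1, count_or_disjoint (fun t h => hexcl t ⟨h.1.1, h.2.1⟩),
      count_comp_filter p1 p2 hinf1, count_comp_filter p2 p1 hinf2, hc1T, hc2T, hc1n, hc2n]
    omega
  -- ### the first hit
  have hex0 : ∃ t, r t ≠ r 0 := by
    rcases htwo 0 with h | h
    · exact ⟨k2, by rw [hk2, h]; omega⟩
    · exact ⟨k1, by rw [hk1, h]; omega⟩
  set a : ℕ := Nat.find hex0 with hadef
  have haq : r a ≠ r 0 := Nat.find_spec hex0
  have hbefore : ∀ t < a, r t = r 0 := fun t ht => not_not.1 (Nat.find_min hex0 ht)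
  have hH0 : ∀ t < a, ¬ H t := by
    intro t ht hHt
    rcases (hH t).1 hHt with ⟨h1, h1'⟩ | ⟨h1, h1'⟩
    · have hr0 : r 0 = 1 := (hbefore t ht) ▸ h1
      have hct : Nat.count p1 t = t :=
        Nat.count_of_forall (fun m hm => by
          show r m = 1; rw [hbefore m (hm.trans ht)]; exact hr0)
      rw [hct] at h1'; omega
    · have hr0 : r 0 = 2 := (hbefore t ht) ▸ h1
      have hct : Nat.count p2 t = t :=
        Nat.count_of_forall (fun m hm => by
          show r m = 2; rw [hbefore m (hm.trans ht)]; exact hr0)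
      rw [hct] at h1'; omega
  have hcnta : Nat.count H a = 0 := Nat.count_of_forall_not hH0
  have hUD0 : UDseq r 0 = (if r 0 = 1 then 5 else 4) := by
    rcases htwo 0 with h0 | h0
    · have hra : r a = 2 := (htwo a).resolve_left (by rw [h0] at haq; exact haq)
      have hc2a : Nat.count p2 a = 0 :=
        Nat.count_of_forall_not (fun m hm => by
          show ¬ r m = 2; rw [hbefore m hm, h0]; omega)
      have hval : hitAt true false r a = some 5 := by
        rw [hitAt_eq, if_neg (by rw [hra]; omega)]
        show (if r (Nat.count p2 a) = 1 then some 5 else none) = some 5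
        rw [hc2a, if_pos h0]
      have hHa : H a := by show (hitAt true false r a).isSome = true; rw [hval]; rfl
      have hnth0 : Nat.nth H 0 = a := hcnta ▸ Nat.nth_count hHa
      rw [hUDdef, hnth0, hval, if_pos h0]; rfl
    · have hra : r a = 1 := (htwo a).resolve_right (by rw [h0] at haq; exact haq)
      have hc1a : Nat.count p1 a = 0 :=
        Nat.count_of_forall_not (fun m hm => by
          show ¬ r m = 1; rw [hbefore m hm, h0]; omega)
      have hval : hitAt true false r a = some 4 := by
        rw [hitAt_eq, if_pos hra]
        show (if r (Nat.count p1 a) = 1 then none else some 4) = some 4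
        rw [hc1a, if_neg (by rw [h0]; omega)]
      have hHa : H a := by show (hitAt true false r a).isSome = true; rw [hval]; rfl
      have hnth0 : Nat.nth H 0 = a := hcnta ▸ Nat.nth_count hHa
      rw [hUDdef, hnth0, hval, if_neg (by rw [h0]; omega)]; rfl
  -- ### the last hit in [0, T)
  set s : ℕ := r (2 * n - 1) with hsdef
  have hexQ : ∃ t, t ≤ T - 1 ∧ r t ≠ s := by
    have : ∃ k0, r k0 ≠ s := by
      rcases htwo (2 * n - 1) with h | h
      · exact ⟨k2, by rw [hk2, hsdef, h]; omega⟩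
      · exact ⟨k1, by rw [hk1, hsdef, h]; omega⟩
    obtain ⟨k0, hk0⟩ := this
    refine ⟨k0 % (2 * n), ?_, by rw [hmod]; exact hk0⟩
    have := Nat.mod_lt k0 hnn
    omega
  set t0 : ℕ := Nat.findGreatest (fun t => r t ≠ s) (T - 1) with ht0def
  have ht0le : t0 ≤ T - 1 := Nat.findGreatest_le _
  have hQt0 : r t0 ≠ s := by
    by_cases h0 : t0 = 0
    · obtain ⟨k0, hk0le, hk0⟩ := hexQ
      have : k0 ≤ t0 := Nat.le_findGreatest hk0le hk0
      have : k0 = 0 := by omega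
      rw [h0, ← this]; exact hk0
    · exact Nat.findGreatest_of_ne_zero (P := fun t => r t ≠ s) (m := t0) ht0def.symm h0
  have hafter : ∀ t, t0 < t → t < T → r t = s := by
    intro t h1 h2
    exact not_not.1 (Nat.findGreatest_is_greatest h1 (by omega))
  -- no hits strictly after t0 in [0, T)
  have hnotH : ∀ t, t0 < t → t < T → ¬ H t := by
    intro t h1 h2 hHt
    have hts : r t = s := hafter t h1 h2
    rcases (hH t).1 hHt with ⟨ha1, ha2⟩ | ⟨ha1, ha2⟩
    · have hconst : Nat.count (fun k => p1 (t + k)) (T - t) = T - t :=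
        Nat.count_of_forall (fun m hm => by
          show r (t + m) = 1
          rw [hafter (t + m) (by omega) (by omega), ← hts]; exact ha1)
      have hadd := Nat.count_add (p := p1) t (T - t)
      rw [show t + (T - t) = T by omega, hconst, hc1T] at hadd
      have hkey : Nat.count p1 t + 2 * n = t := by omega
      have hpp := hper (Nat.count p1 t)
      rw [hkey] at hpp
      rw [← hpp] at ha2
      omega
    · have hconst : Nat.count (fun k => p2 (t + k)) (T - t) = T - t :=
        Nat.count_of_forall (fun m hm => by
          show r (t + m) = 2
          rw [hafter (t + m) (by omega) (by omega), ← hts]; exact ha1)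
      have hadd := Nat.count_add (p := p2) t (T - t)
      rw [show t + (T - t) = T by omega, hconst, hc2T] at hadd
      have hkey : Nat.count p2 t + 2 * n = t := by omega
      have hpp := hper (Nat.count p2 t)
      rw [hkey] at hpp
      rw [← hpp] at ha2
      omega
  have ht0T : t0 < T := by omega
  -- the hit at t0 and its value
  have hUDlast : UDseq r (2 * n - 1) = (if r (2 * n - 1) = 1 then 5 else 4) := by
    have hmain : ∀ hval : Option ℕ, hitAt true false r t0 = hval → hval.isSome = true →
        UDseq r (2 * n - 1) = hval.getD 4 := by
      intro hval hv hs'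
      have hHt0 : H t0 := by show (hitAt true false r t0).isSome = true; rw [hv]; exact hs'
      have honeH : Nat.count (fun k => H (t0 + k)) (T - t0) = 1 := by
        apply count_eq_one_of (by omega)
        · show H (t0 + 0); simpa using hHt0
        · intro k hk1 hk2 hc
          exact hnotH (t0 + k) (by omega) (by omega) hc
      have haddH := Nat.count_add (p := H) t0 (T - t0)
      rw [show t0 + (T - t0) = T by omega, honeH, hcHT] at haddH
      have hcHt0 : Nat.count H t0 = 2 * n - 1 := by omega
      have hnth : Nat.nth H (2 * n - 1) = t0 := hcHt0 ▸ Nat.nth_count hHt0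
      rw [hUDdef, hnth, hv]
    rcases htwo (2 * n - 1) with hs1 | hs1
    · have hrt0 : r t0 = 2 :=
        (htwo t0).resolve_left (by rw [hsdef, hs1] at hQt0; exact hQt0)
      have hone2 : Nat.count (fun k => p2 (t0 + k)) (T - t0) = 1 := by
        apply count_eq_one_of (by omega)
        · show r (t0 + 0) = 2; simpa using hrt0
        · intro k hk1 hk2
          show ¬ r (t0 + k) = 2
          rw [hafter (t0 + k) (by omega) (by omega), hsdef, hs1]; omega
      have hadd2 := Nat.count_add (p := p2) t0 (T - t0)
      rw [show t0 + (T - t0) = T by omega, hone2, hc2T] at hadd2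
      have hct0 : Nat.count p2 t0 = 2 * n - 1 := by omega
      have hval : hitAt true false r t0 = some 5 := by
        rw [hitAt_eq, if_neg (by rw [hrt0]; omega)]
        show (if r (Nat.count p2 t0) = 1 then some 5 else none) = some 5
        rw [hct0, if_pos hs1]
      rw [hmain (some 5) hval rfl, if_pos hs1]; rfl
    · have hrt0 : r t0 = 1 :=
        (htwo t0).resolve_right (by rw [hsdef, hs1] at hQt0; exact hQt0)
      have hone1 : Nat.count (fun k => p1 (t0 + k)) (T - t0) = 1 := by
        apply count_eq_one_of (by omega)
        · show r (t0 + 0) = 1; simpa using hrt0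
        · intro k hk1 hk2
          show ¬ r (t0 + k) = 1
          rw [hafter (t0 + k) (by omega) (by omega), hsdef, hs1]; omega
      have hadd1 := Nat.count_add (p := p1) t0 (T - t0)
      rw [show t0 + (T - t0) = T by omega, hone1, hc1T] at hadd1
      have hct0 : Nat.count p1 t0 = 2 * n - 1 := by omega
      have hval : hitAt true false r t0 = some 4 := by
        rw [hitAt_eq, if_pos hrt0]
        show (if r (Nat.count p1 t0) = 1 then none else some 4) = some 4
        rw [hct0, if_neg (by rw [hs1]; omega)]
      rw [hmain (some 4) hval rfl, if_neg (by rw [hs1]; omega)]; rfl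
  -- ### conclusion from the palindrome
  have h00 : UDseq r 0 = UDseq r (2 * n - 1) := by simpa using hpal 0 (by omega)
  rw [hUD0, hUDlast] at h00
  rcases htwo 0 with h | h <;> rcases htwo (2 * n - 1) with h' | h' <;>
    simp [h, h'] at h00 ⊢ <;> omega
end
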